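/- Let 𝒜 ⊆ ℬ ⊆ F be nested sub-σ-algebras, let S : Ω → [0,1] be an 𝒜-measurable random variable, and set C := E[Y | 𝒜] and Q := E[Y | ℬ]. Then E[(S − Y)²] = E[(S − C)²] + E[(C − Q)²] + E[Q(1 − Q)]. -/

import Mathlib

open MeasureTheory

private lemma integral_mul_condexp_eq
    {Ω : Type*} {mΩ : MeasurableSpace Ω} {P : Measure Ω} [IsProbabilityMeasure P]
    {m : MeasurableSpace Ω} (hm : m ≤ mΩ) {f g : Ω → ℝ} {c : ℝ}
    (hf : StronglyMeasurable[m] f) (hfb : ∀ᵐ ω ∂P, ‖f ω‖ ≤ c)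
    (hg : Integrable g P) :
    ∫ ω, f ω * g ω ∂P = ∫ ω, f ω * (P[g|m]) ω ∂P := by
  have hfg : Integrable (fun ω => f ω * g ω) P :=
    hg.bdd_mul (hf.mono hm).aestronglyMeasurable hfb
  have hfg' : Integrable (f * g) P := hfg
  have h2 : P[f * g|m] =ᵐ[P] f * P[g|m] := condExp_mul_of_stronglyMeasurable_left hf hfg' hg
  calc ∫ ω, f ω * g ω ∂P = ∫ ω, (P[f * g|m]) ω ∂P := (integral_condExp hm (f := f * g)).symm
    _ = ∫ ω, (f * P[g|m]) ω ∂P := integral_congr_ae h2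
    _ = ∫ ω, f ω * (P[g|m]) ω ∂P := rfl

/-- variance-type decomposition for the Brier score. For nested
sub-σ-algebras `𝒜 ⊆ ℬ ⊆ F`, an `𝒜`-measurable score `S : Ω → [0,1]`, and a binary
outcome `Y`, with `C := E[Y|𝒜]` and `Q := E[Y|ℬ]`,
`E[(S−Y)²] = E[(S−C)²] + E[(C−Q)²] + E[Q(1−Q)]`. -/
theorem brier_variance_decomposition
    {Ω : Type*} {mΩ : MeasurableSpace Ω} {P : Measure Ω} [IsProbabilityMeasure P]
    (Y : Ω → ℝ) (hY : Measurable Y) (hY01 : ∀ ω, Y ω = 0 ∨ Y ω = 1)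
    {𝒜 ℬ : MeasurableSpace Ω} (h𝒜ℬ : 𝒜 ≤ ℬ) (hℬ : ℬ ≤ mΩ)
    (S : Ω → ℝ) (hSmeas : Measurable[𝒜] S) (hS01 : ∀ ω, S ω ∈ Set.Icc (0 : ℝ) 1) :
    ∫ ω, (S ω - Y ω) ^ 2 ∂P
      = ∫ ω, (S ω - (P[Y|𝒜]) ω) ^ 2 ∂P
        + ∫ ω, ((P[Y|𝒜]) ω - (P[Y|ℬ]) ω) ^ 2 ∂P
        + ∫ ω, (P[Y|ℬ]) ω * (1 - (P[Y|ℬ]) ω) ∂P := by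
  have h𝒜 : 𝒜 ≤ mΩ := h𝒜ℬ.trans hℬ
  set C : Ω → ℝ := P[Y|𝒜] with hCdef
  set Q : Ω → ℝ := P[Y|ℬ] with hQdef
  -- basic bounds and integrability
  have hYb : ∀ ω, ‖Y ω‖ ≤ 1 := by
    intro ω; rcases hY01 ω with h | h <;> simp [h]
  have hYint : Integrable Y P :=
    ⟨hY.aestronglyMeasurable, HasFiniteIntegral.of_bounded (Filter.Eventually.of_forall hYb)⟩
  have hSb : ∀ ω, ‖S ω‖ ≤ 1 := by
    intro ω; rcases hS01 ω with ⟨h0, h1⟩; rw [Real.norm_eq_abs, abs_le]; constructor <;> linarith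
  have hSsm : StronglyMeasurable[𝒜] S := hSmeas.stronglyMeasurable
  have hSint : Integrable S P :=
    ⟨(hSsm.mono h𝒜).aestronglyMeasurable,
      HasFiniteIntegral.of_bounded (Filter.Eventually.of_forall hSb)⟩
  have hCint : Integrable C P := integrable_condExp
  have hQint : Integrable Q P := integrable_condExp
  have hCsm : StronglyMeasurable[𝒜] C := stronglyMeasurable_condExp
  have hQsm : StronglyMeasurable[ℬ] Q := stronglyMeasurable_condExp
  have hY0 : (0 : Ω → ℝ) ≤ᵐ[P] Y := Filter.Eventually.of_forall fun ω => by
    rcases hY01 ω with h | h <;> simp [h]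
  have hY1 : Y ≤ᵐ[P] fun _ => (1 : ℝ) := Filter.Eventually.of_forall fun ω => by
    rcases hY01 ω with h | h <;> simp [h]
  have hCb : ∀ᵐ ω ∂P, ‖C ω‖ ≤ 1 := by
    have h0 : (0 : Ω → ℝ) ≤ᵐ[P] C := condExp_nonneg hY0
    have h1 : C ≤ᵐ[P] fun _ => (1 : ℝ) := by
      have := condExp_mono (m := 𝒜) hYint (integrable_const (1 : ℝ)) hY1
      rwa [condExp_const h𝒜] at this
    filter_upwards [h0, h1] with ω hω0 hω1
    simp only [Pi.zero_apply] at hω0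
    rw [Real.norm_eq_abs, abs_le]; exact ⟨by linarith, hω1⟩
  have hQb : ∀ᵐ ω ∂P, ‖Q ω‖ ≤ 1 := by
    have h0 : (0 : Ω → ℝ) ≤ᵐ[P] Q := condExp_nonneg hY0
    have h1 : Q ≤ᵐ[P] fun _ => (1 : ℝ) := by
      have := condExp_mono (m := ℬ) hYint (integrable_const (1 : ℝ)) hY1
      rwa [condExp_const hℬ] at this
    filter_upwards [h0, h1] with ω hω0 hω1
    simp only [Pi.zero_apply] at hω0
    rw [Real.norm_eq_abs, abs_le]; exact ⟨by linarith, hω1⟩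
  -- conditional expectation identities
  have hCC : P[C|𝒜] = C := condExp_of_stronglyMeasurable h𝒜 hCsm hCint
  have hQQ : P[Q|ℬ] = Q := condExp_of_stronglyMeasurable hℬ hQsm hQint
  have hQC : P[Q|𝒜] =ᵐ[P] C := condExp_condExp_of_le h𝒜ℬ hℬ
  -- cross term 1 : ∫ (S-C)(C-Q) = 0
  have hSCsm : StronglyMeasurable[𝒜] (fun ω => S ω - C ω) := hSsm.sub hCsm
  have hSCb : ∀ᵐ ω ∂P, ‖S ω - C ω‖ ≤ 2 := by
    filter_upwards [hCb] with ω hC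
    calc ‖S ω - C ω‖ ≤ ‖S ω‖ + ‖C ω‖ := norm_sub_le _ _
      _ ≤ 2 := by linarith [hSb ω]
  have hCQzero : P[fun ω => C ω - Q ω|𝒜] =ᵐ[P] 0 := by
    have h1 : P[fun ω => C ω - Q ω|𝒜] =ᵐ[P] P[C|𝒜] - P[Q|𝒜] := condExp_sub hCint hQint _
    filter_upwards [h1, hQC] with ω h1 h2
    simp only [Pi.sub_apply, Pi.zero_apply] at *
    rw [h1, hCC, h2]; ring
  have hX1 : ∫ ω, (S ω - C ω) * (C ω - Q ω) ∂P = 0 := by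
    rw [integral_mul_condexp_eq h𝒜 (g := fun ω => C ω - Q ω) hSCsm hSCb (hCint.sub hQint)]
    calc ∫ ω, (S ω - C ω) * (P[fun ω => C ω - Q ω|𝒜]) ω ∂P
        = ∫ ω, (0 : ℝ) ∂P := by
          refine integral_congr_ae ?_
          filter_upwards [hCQzero] with ω hω
          simp [hω]
      _ = 0 := integral_zero _ _
  -- cross terms 2,3 : g = Q - Y with P[Q-Y|ℬ] = 0
  have hQYzero : P[fun ω => Q ω - Y ω|ℬ] =ᵐ[P] 0 := by
    have h1 : P[fun ω => Q ω - Y ω|ℬ] =ᵐ[P] P[Q|ℬ] - P[Y|ℬ] := condExp_sub hQint hYint _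
    filter_upwards [h1] with ω h1
    simp only [Pi.sub_apply, Pi.zero_apply] at *
    rw [h1, hQQ]; ring
  have hX2 : ∫ ω, (S ω - C ω) * (Q ω - Y ω) ∂P = 0 := by
    rw [integral_mul_condexp_eq hℬ (g := fun ω => Q ω - Y ω) (hSCsm.mono h𝒜ℬ) hSCb (hQint.sub hYint)]
    calc ∫ ω, (S ω - C ω) * (P[fun ω => Q ω - Y ω|ℬ]) ω ∂P
        = ∫ ω, (0 : ℝ) ∂P := by
          refine integral_congr_ae ?_
          filter_upwards [hQYzero] with ω hω
          simp [hω]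
      _ = 0 := integral_zero _ _
  have hCQsm : StronglyMeasurable[ℬ] (fun ω => C ω - Q ω) := (hCsm.mono h𝒜ℬ).sub hQsm
  have hCQb : ∀ᵐ ω ∂P, ‖C ω - Q ω‖ ≤ 2 := by
    filter_upwards [hCb, hQb] with ω h1 h2
    calc ‖C ω - Q ω‖ ≤ ‖C ω‖ + ‖Q ω‖ := norm_sub_le _ _
      _ ≤ 2 := by linarith
  have hX3 : ∫ ω, (C ω - Q ω) * (Q ω - Y ω) ∂P = 0 := by
    rw [integral_mul_condexp_eq hℬ (g := fun ω => Q ω - Y ω) hCQsm hCQb (hQint.sub hYint)]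
    calc ∫ ω, (C ω - Q ω) * (P[fun ω => Q ω - Y ω|ℬ]) ω ∂P
        = ∫ ω, (0 : ℝ) ∂P := by
          refine integral_congr_ae ?_
          filter_upwards [hQYzero] with ω hω
          simp [hω]
      _ = 0 := integral_zero _ _
  -- last term : ∫ (Q-Y)^2 = ∫ Q(1-Q)
  have hQYmul : ∫ ω, Q ω * Y ω ∂P = ∫ ω, Q ω * Q ω ∂P := by
    have h := integral_mul_condexp_eq hℬ (g := Y) hQsm hQb hYint
    rw [h]
  have hEY : ∫ ω, Y ω ∂P = ∫ ω, Q ω ∂P := (integral_condExp hℬ (f := Y)).symm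
  have hQaesm : AEStronglyMeasurable[mΩ] Q P := (hQsm.mono hℬ).aestronglyMeasurable
  have hQQint : Integrable (fun ω => Q ω * Q ω) P := hQint.bdd_mul hQaesm hQb
  have hQYint : Integrable (fun ω => Q ω * Y ω) P := hYint.bdd_mul hQaesm hQb
  have hlast : ∫ ω, (Q ω - Y ω) ^ 2 ∂P = ∫ ω, Q ω * (1 - Q ω) ∂P := by
    have ptw : ∀ ω, (Q ω - Y ω) ^ 2 = Q ω * Q ω - 2 * (Q ω * Y ω) + Y ω := by
      intro ω; rcases hY01 ω with h | h <;> rw [h] <;> ring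
    have h2 : ∫ ω, Q ω * (1 - Q ω) ∂P = ∫ ω, Q ω ∂P - ∫ ω, Q ω * Q ω ∂P := by
      have e : ∀ ω, Q ω * (1 - Q ω) = Q ω - Q ω * Q ω := fun ω => by ring
      simp_rw [e]
      exact integral_sub hQint hQQint
    calc ∫ ω, (Q ω - Y ω) ^ 2 ∂P
        = ∫ ω, (Q ω * Q ω - 2 * (Q ω * Y ω) + Y ω) ∂P := by simp_rw [ptw]
      _ = ∫ ω, (Q ω * Q ω - 2 * (Q ω * Y ω)) ∂P + ∫ ω, Y ω ∂P :=
          integral_add (hQQint.sub (hQYint.const_mul 2)) hYint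
      _ = ∫ ω, Q ω * Q ω ∂P - ∫ ω, 2 * (Q ω * Y ω) ∂P + ∫ ω, Y ω ∂P := by
          rw [integral_sub hQQint (hQYint.const_mul 2)]
      _ = ∫ ω, Q ω * Q ω ∂P - 2 * ∫ ω, Q ω * Y ω ∂P + ∫ ω, Y ω ∂P := by
          rw [integral_const_mul]
      _ = ∫ ω, Q ω * (1 - Q ω) ∂P := by rw [hQYmul, hEY, h2]; ring
  -- integrability of all six terms
  have hSCaesm : AEStronglyMeasurable[mΩ] (fun ω => S ω - C ω) P :=
    ((hSCsm.mono h𝒜)).aestronglyMeasurable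
  have hCQaesm : AEStronglyMeasurable[mΩ] (fun ω => C ω - Q ω) P :=
    ((hCQsm.mono hℬ)).aestronglyMeasurable
  have hQYb : ∀ᵐ ω ∂P, ‖Q ω - Y ω‖ ≤ 2 := by
    filter_upwards [hQb] with ω h1
    calc ‖Q ω - Y ω‖ ≤ ‖Q ω‖ + ‖Y ω‖ := norm_sub_le _ _
      _ ≤ 2 := by linarith [hYb ω]
  have hQYaesm : AEStronglyMeasurable[mΩ] (fun ω => Q ω - Y ω) P :=
    hQaesm.sub hY.aestronglyMeasurable
  have hI1 : Integrable (fun ω => (S ω - C ω) ^ 2) P := by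
    simpa [pow_two] using (hSint.sub hCint).bdd_mul hSCaesm hSCb
  have hI2 : Integrable (fun ω => (C ω - Q ω) ^ 2) P := by
    simpa [pow_two] using (hCint.sub hQint).bdd_mul hCQaesm hCQb
  have hI3 : Integrable (fun ω => (Q ω - Y ω) ^ 2) P := by
    simpa [pow_two] using (hQint.sub hYint).bdd_mul hQYaesm hQYb
  have hI4 : Integrable (fun ω => 2 * ((S ω - C ω) * (C ω - Q ω))) P :=
    ((hCint.sub hQint).bdd_mul hSCaesm hSCb).const_mul 2
  have hI5 : Integrable (fun ω => 2 * ((S ω - C ω) * (Q ω - Y ω))) P :=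
    ((hQint.sub hYint).bdd_mul hSCaesm hSCb).const_mul 2
  have hI6 : Integrable (fun ω => 2 * ((C ω - Q ω) * (Q ω - Y ω))) P :=
    ((hQint.sub hYint).bdd_mul hCQaesm hCQb).const_mul 2
  have expand : ∀ ω, (S ω - Y ω) ^ 2
      = (S ω - C ω) ^ 2 + (C ω - Q ω) ^ 2 + (Q ω - Y ω) ^ 2
        + 2 * ((S ω - C ω) * (C ω - Q ω)) + 2 * ((S ω - C ω) * (Q ω - Y ω))
        + 2 * ((C ω - Q ω) * (Q ω - Y ω)) := fun ω => by ring
  calc ∫ ω, (S ω - Y ω) ^ 2 ∂P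
      = ∫ ω, ((S ω - C ω) ^ 2 + (C ω - Q ω) ^ 2 + (Q ω - Y ω) ^ 2
        + 2 * ((S ω - C ω) * (C ω - Q ω)) + 2 * ((S ω - C ω) * (Q ω - Y ω))
        + 2 * ((C ω - Q ω) * (Q ω - Y ω))) ∂P := by simp_rw [expand]
    _ = ∫ ω, (S ω - C ω) ^ 2 ∂P + ∫ ω, (C ω - Q ω) ^ 2 ∂P + ∫ ω, (Q ω - Y ω) ^ 2 ∂P
        + ∫ ω, 2 * ((S ω - C ω) * (C ω - Q ω)) ∂P
        + ∫ ω, 2 * ((S ω - C ω) * (Q ω - Y ω)) ∂P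
        + ∫ ω, 2 * ((C ω - Q ω) * (Q ω - Y ω)) ∂P := by
        have hA : Integrable (fun ω => (S ω - C ω) ^ 2 + (C ω - Q ω) ^ 2) P := hI1.add hI2
        have hB : Integrable (fun ω => (S ω - C ω) ^ 2 + (C ω - Q ω) ^ 2
          + (Q ω - Y ω) ^ 2) P := hA.add hI3
        have hC2 : Integrable (fun ω => (S ω - C ω) ^ 2 + (C ω - Q ω) ^ 2 + (Q ω - Y ω) ^ 2
          + 2 * ((S ω - C ω) * (C ω - Q ω))) P := hB.add hI4
        have hD : Integrable (fun ω => (S ω - C ω) ^ 2 + (C ω - Q ω) ^ 2 + (Q ω - Y ω) ^ 2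
          + 2 * ((S ω - C ω) * (C ω - Q ω)) + 2 * ((S ω - C ω) * (Q ω - Y ω))) P := hC2.add hI5
        rw [show (∫ ω, ((S ω - C ω) ^ 2 + (C ω - Q ω) ^ 2 + (Q ω - Y ω) ^ 2
            + 2 * ((S ω - C ω) * (C ω - Q ω)) + 2 * ((S ω - C ω) * (Q ω - Y ω))
            + 2 * ((C ω - Q ω) * (Q ω - Y ω))) ∂P)
          = ∫ ω, ((S ω - C ω) ^ 2 + (C ω - Q ω) ^ 2 + (Q ω - Y ω) ^ 2
            + 2 * ((S ω - C ω) * (C ω - Q ω)) + 2 * ((S ω - C ω) * (Q ω - Y ω))) ∂P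
            + ∫ ω, 2 * ((C ω - Q ω) * (Q ω - Y ω)) ∂P from integral_add hD hI6,
          integral_add hC2 hI5, integral_add hB hI4, integral_add hA hI3, integral_add hI1 hI2]
    _ = ∫ ω, (S ω - C ω) ^ 2 ∂P + ∫ ω, (C ω - Q ω) ^ 2 ∂P
        + ∫ ω, Q ω * (1 - Q ω) ∂P := by
        rw [integral_const_mul, integral_const_mul, integral_const_mul,
          hX1, hX2, hX3, hlast]
        ring
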